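/- Let s be a binary string of length l and s^{(1)} its expansion. Let x, y be positive integers with x < y ≤ 4l such that y - x = 2^m for some integer m ≥ 2 and s^{(1)}_x = s^{(1)}_y. Then s_{pos(x)} = s_{pos(y)}. -/
import Mathlib


/-- The set of powers of two. -/
def D : Set ℕ := {d | ∃ i : ℕ, d = 2 ^ i}

/-- `pos i = ⌈i / 4⌉`. -/
def pos (i : ℕ) : ℕ := (i + 3) / 4

/-- The expansion of a binary string: each `0` becomes `0011`, each `1` becomes `1100`.
For `1 ≤ m`, `s⁽¹⁾_m = s_{⌈m/4⌉}` if `m % 4 ∈ {1,2}` and `1 - s_{⌈m/4⌉}` otherwise. -/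
def expand (s : ℕ → Fin 2) : ℕ → Fin 2 :=
  fun m => if m % 4 = 1 ∨ m % 4 = 2 then s (pos m) else 1 - s (pos m)

/-- `a 0 < a 1 < ⋯ < a (k-1)` is a `D`-diffsequence contained in `{1, …, n}`. -/
def IsDiffseqIn (n k : ℕ) (a : ℕ → ℕ) : Prop :=
  (∀ i < k, 1 ≤ a i ∧ a i ≤ n) ∧
    ∀ i, i + 1 < k → a i < a (i + 1) ∧ a (i + 1) - a i ∈ D

/-- The set of hops of a length-`k` diffsequence `a` with respect to the string `s`:
indices `j` (0-based) with `a (j+1) - a j = 1` and `s (a (j+1)) ≠ s (a j)`. -/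
def hops (s : ℕ → Fin 2) (k : ℕ) (a : ℕ → ℕ) : Finset ℕ :=
  (Finset.range (k - 1)).filter fun j => a (j + 1) = a j + 1 ∧ s (a (j + 1)) ≠ s (a j)

/-- `psi s n h` : the maximum length of a `D`-diffsequence contained in `{1, …, n}`
with at most `h` hops with respect to `s` (0 if there is none). -/
noncomputable def psi (s : ℕ → Fin 2) (n h : ℕ) : ℕ :=
  sSup {k | ∃ a : ℕ → ℕ, IsDiffseqIn n k a ∧ (hops s k a).card ≤ h}

theorem stmt_11 (l : ℕ) (s : ℕ → Fin 2) (x y m : ℕ)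
    (hx : 1 ≤ x) (hxy : x < y) (hy : y ≤ 4 * l)
    (hm : 2 ≤ m) (hpow : y - x = 2 ^ m)
    (heq : expand s x = expand s y) :
    s (pos x) = s (pos y) := by
  have h4 : (4 : ℕ) ∣ 2 ^ m := by
    have : (2:ℕ)^2 ∣ 2^m := pow_dvd_pow 2 hm
    simpa using this
  have hmod : x % 4 = y % 4 := by
    have hy' : y = x + 2 ^ m := by omega
    obtain ⟨c, hc⟩ := h4
    subst hy'
    omega
  unfold expand at heq
  rw [hmod] at heq
  by_cases hc : y % 4 = 1 ∨ y % 4 = 2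
  · simpa [hc] using heq
  · simp only [hc, if_false] at heq
    have := heq
    generalize s (pos x) = a at this ⊢
    generalize s (pos y) = b at this ⊢
    fin_cases a <;> fin_cases b <;> simp_all
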